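/- There exists a scalar c₁ ∈ ℝ (depending only on κ and n) such that ∫_{SO_n} A · M_Γ(A) dA = c₁ Γ for every Γ ∈ SO_n, where c₁ is the average of Tr(A)/n against the weight exp(κ Tr(A)/2) over SO_n. -/

import Mathlib

open Matrix MeasureTheory Real

instance (n : ℕ) : MeasurableSpace (Matrix (Fin n) (Fin n) ℝ) := MeasurableSpace.pi

instance (n : ℕ) : BorelSpace (Matrix (Fin n) (Fin n) ℝ) :=
  inferInstanceAs (BorelSpace (Fin n → Fin n → ℝ))

namespace VonMisesAux

variable {n : ℕ}

/-- The von Mises weight. -/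
noncomputable def w (κ : ℝ) (A : Matrix (Fin n) (Fin n) ℝ) : ℝ := Real.exp (κ * A.trace / 2)

lemma continuous_trace : Continuous (fun A : Matrix (Fin n) (Fin n) ℝ => A.trace) := by
  unfold Matrix.trace Matrix.diag
  exact continuous_finset_sum _ fun i _ => (continuous_apply i).comp (continuous_apply i)

lemma continuous_w (κ : ℝ) : Continuous (w (n := n) κ) :=
  Real.continuous_exp.comp (((continuous_const.mul continuous_trace).div_const 2))

lemma continuous_entry (i j : Fin n) : Continuous (fun A : Matrix (Fin n) (Fin n) ℝ => A i j) :=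
  (continuous_apply j).comp (continuous_apply i)

lemma entry_abs_le {A : Matrix (Fin n) (Fin n) ℝ} (h : Aᵀ * A = 1) (i j : Fin n) :
    |A i j| ≤ 1 := by
  have h1 : (Aᵀ * A) j j = 1 := by rw [h, Matrix.one_apply_eq]
  have h2 : ∑ k, A k j ^ 2 = 1 := by
    rw [← h1, Matrix.mul_apply]; exact Finset.sum_congr rfl fun k _ => by
      simp [Matrix.transpose_apply, sq]
  have h3 : A i j ^ 2 ≤ 1 := by
    rw [← h2]
    exact Finset.single_le_sum (f := fun k => A k j ^ 2) (fun k _ => sq_nonneg _)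
      (Finset.mem_univ i)
  nlinarith [abs_nonneg (A i j), sq_abs (A i j)]

lemma trace_abs_le {A : Matrix (Fin n) (Fin n) ℝ} (h : Aᵀ * A = 1) :
    |A.trace| ≤ n := by
  calc |A.trace| = |∑ i, A i i| := rfl
    _ ≤ ∑ i, |A i i| := Finset.abs_sum_le_sum_abs _ _
    _ ≤ ∑ _i : Fin n, (1:ℝ) := Finset.sum_le_sum fun i _ => entry_abs_le h i i
    _ = n := by simp

lemma w_le {κ : ℝ} (hκ : 0 < κ) {A : Matrix (Fin n) (Fin n) ℝ} (h : Aᵀ * A = 1) :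
    w κ A ≤ Real.exp (κ * n / 2) := by
  apply Real.exp_le_exp.2
  have := (abs_le.1 (trace_abs_le h)).2
  have hκ' := hκ.le
  nlinarith

variable {κ : ℝ} {μ : Measure (Matrix (Fin n) (Fin n) ℝ)}

lemma integrable_entry_w [IsProbabilityMeasure μ] (hκ : 0 < κ)
    (hsupp : ∀ᵐ A ∂μ, Aᵀ * A = 1 ∧ A.det = 1)
    (i j : Fin n) : Integrable (fun A => A i j * w κ A) μ := by
  apply Integrable.mono' (integrable_const (Real.exp (κ * n / 2)))
    ((continuous_entry i j).mul (continuous_w κ)).aestronglyMeasurable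
  filter_upwards [hsupp] with A hA
  have h1 := entry_abs_le hA.1 i j
  have h2 := w_le hκ hA.1
  have h3 : 0 < w κ A := Real.exp_pos _
  show ‖A i j * w κ A‖ ≤ _
  rw [Real.norm_eq_abs, abs_mul, abs_of_pos h3]
  calc |A i j| * w κ A ≤ 1 * Real.exp (κ * n / 2) := by
        apply mul_le_mul h1 h2 h3.le zero_le_one
    _ = _ := one_mul _

lemma integral_comp_mp {T : Matrix (Fin n) (Fin n) ℝ → Matrix (Fin n) (Fin n) ℝ}
    (hT : MeasurePreserving T μ μ) {f : Matrix (Fin n) (Fin n) ℝ → ℝ}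
    (hf : AEStronglyMeasurable f μ) : ∫ A, f A ∂μ = ∫ A, f (T A) ∂μ := by
  conv_lhs => rw [← hT.map_eq]
  exact integral_map hT.measurable.aemeasurable (by rwa [hT.map_eq])

lemma m_conj
    (hinvL : ∀ g : Matrix (Fin n) (Fin n) ℝ, gᵀ * g = 1 → g.det = 1 →
      MeasurePreserving (fun A => g * A) μ μ)
    (hinvR : ∀ g : Matrix (Fin n) (Fin n) ℝ, gᵀ * g = 1 → g.det = 1 →
      MeasurePreserving (fun A => A * g) μ μ)
    (g : Matrix (Fin n) (Fin n) ℝ) (hg1 : gᵀ * g = 1) (hg2 : g.det = 1) (i j : Fin n) :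
    ∫ A, A i j * w κ A ∂μ = ∫ A, (g * A * gᵀ) i j * w κ A ∂μ := by
  have hg1' : g * gᵀ = 1 := mul_eq_one_comm.mp hg1
  have hgT1 : gᵀᵀ * gᵀ = 1 := by rw [Matrix.transpose_transpose]; exact hg1'
  have hgT2 : gᵀ.det = 1 := by rw [Matrix.det_transpose]; exact hg2
  have hT : MeasurePreserving (fun A : Matrix (Fin n) (Fin n) ℝ => g * A * gᵀ) μ μ :=
    (hinvR gᵀ hgT1 hgT2).comp (hinvL g hg1 hg2)
  have := integral_comp_mp hT
    (f := fun A => A i j * w κ A)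
    (((continuous_entry i j).mul (continuous_w κ)).aestronglyMeasurable)
  rw [this]
  refine integral_congr_ae (Filter.Eventually.of_forall fun A => ?_)
  have htr : (g * A * gᵀ).trace = A.trace := by
    rw [Matrix.trace_mul_cycle, hg1, Matrix.one_mul]
  simp only [w, htr]

lemma m_perm
    (hinvL : ∀ g : Matrix (Fin n) (Fin n) ℝ, gᵀ * g = 1 → g.det = 1 →
      MeasurePreserving (fun A => g * A) μ μ)
    (hinvR : ∀ g : Matrix (Fin n) (Fin n) ℝ, gᵀ * g = 1 → g.det = 1 →
      MeasurePreserving (fun A => A * g) μ μ)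
    (σ : Equiv.Perm (Fin n)) (hσ : Equiv.Perm.sign σ = 1) (i j : Fin n) :
    ∫ A, A i j * w κ A ∂μ = ∫ A, A (σ i) (σ j) * w κ A ∂μ := by
  set g : Matrix (Fin n) (Fin n) ℝ := σ.toPEquiv.toMatrix with hg
  have hg1 : gᵀ * g = 1 := by
    rw [hg, ← PEquiv.toMatrix_symm, ← Equiv.toPEquiv_symm, ← PEquiv.toMatrix_trans,
      ← Equiv.toPEquiv_trans, Equiv.symm_trans_self, Equiv.toPEquiv_refl, PEquiv.toMatrix_refl]
  have hg2 : g.det = 1 := by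
    rw [hg]
    have := Matrix.det_permutation (R := ℝ) σ
    rw [Equiv.Perm.permMatrix] at this
    rw [this, hσ]; simp
  have hconj : ∀ A : Matrix (Fin n) (Fin n) ℝ, g * A * gᵀ = A.submatrix σ σ := by
    intro A
    rw [hg, ← PEquiv.toMatrix_symm, ← Equiv.toPEquiv_symm]
    rw [PEquiv.toMatrix_toPEquiv_mul, PEquiv.mul_toMatrix_toPEquiv, Equiv.symm_symm,
      Matrix.submatrix_submatrix]
    rfl
  have := m_conj (κ := κ) hinvL hinvR g hg1 hg2 i j
  rw [this]
  refine integral_congr_ae (Filter.Eventually.of_forall fun A => ?_)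
  dsimp only; rw [hconj A, Matrix.submatrix_apply]

lemma exists_third (hn3 : 3 ≤ n) (i j : Fin n) : ∃ k : Fin n, k ≠ i ∧ k ≠ j := by
  have hne : ({i, j} : Finset (Fin n)) ≠ Finset.univ := by
    intro h
    have hc := congrArg Finset.card h
    have h2 : ({i, j} : Finset (Fin n)).card ≤ 2 :=
      (Finset.card_insert_le _ _).trans (by simp)
    rw [Finset.card_univ, Fintype.card_fin] at hc
    omega
  obtain ⟨k, _, hk⟩ := Finset.exists_of_ssubset (Finset.ssubset_univ_iff.2 hne)
  refine ⟨k, ?_, ?_⟩ <;> · intro h; apply hk; simp [h]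

lemma m_diag_eq (hn3 : 3 ≤ n)
    (hinvL : ∀ g : Matrix (Fin n) (Fin n) ℝ, gᵀ * g = 1 → g.det = 1 →
      MeasurePreserving (fun A => g * A) μ μ)
    (hinvR : ∀ g : Matrix (Fin n) (Fin n) ℝ, gᵀ * g = 1 → g.det = 1 →
      MeasurePreserving (fun A => A * g) μ μ)
    (i j : Fin n) :
    ∫ A, A j j * w κ A ∂μ = ∫ A, A i i * w κ A ∂μ := by
  rcases eq_or_ne i j with rfl | hij
  · rfl
  obtain ⟨k, hki, hkj⟩ := exists_third hn3 i j
  set σ : Equiv.Perm (Fin n) := Equiv.swap j k * Equiv.swap i j with hσdef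
  have hσj : σ j = i := by
    rw [hσdef]
    simp only [Equiv.Perm.mul_apply, Equiv.swap_apply_right]
    exact Equiv.swap_apply_of_ne_of_ne hij hki.symm
  have hsign : Equiv.Perm.sign σ = 1 := by
    simp [hσdef, Equiv.Perm.sign_swap (Ne.symm hkj), Equiv.Perm.sign_swap hij]
  have := m_perm (κ := κ) hinvL hinvR σ hsign j j
  rw [this, hσj]

lemma m_offdiag (hn3 : 3 ≤ n)
    (hinvL : ∀ g : Matrix (Fin n) (Fin n) ℝ, gᵀ * g = 1 → g.det = 1 →
      MeasurePreserving (fun A => g * A) μ μ)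
    (hinvR : ∀ g : Matrix (Fin n) (Fin n) ℝ, gᵀ * g = 1 → g.det = 1 →
      MeasurePreserving (fun A => A * g) μ μ)
    {i j : Fin n} (hij : i ≠ j) :
    ∫ A, A i j * w κ A ∂μ = 0 := by
  obtain ⟨k, hki, hkj⟩ := exists_third hn3 i j
  classical
  set ε : Fin n → ℝ := fun l => if l = i ∨ l = k then -1 else 1 with hε
  have hεsq : ∀ l, ε l * ε l = 1 := by
    intro l; by_cases h : l = i ∨ l = k <;> simp [hε, h]
  set g : Matrix (Fin n) (Fin n) ℝ := Matrix.diagonal ε with hg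
  have hg1 : gᵀ * g = 1 := by
    rw [hg, Matrix.diagonal_transpose, Matrix.diagonal_mul_diagonal]
    ext a b
    rcases eq_or_ne a b with rfl | hab
    · simp [Matrix.diagonal_apply_eq, hεsq a]
    · simp [Matrix.diagonal_apply_ne _ hab, Matrix.one_apply_ne hab]
  have hg2 : g.det = 1 := by
    rw [hg, Matrix.det_diagonal]
    have : ∏ l, ε l = ∏ l ∈ ({i, k} : Finset (Fin n)), ε l := by
      refine (Finset.prod_subset (Finset.subset_univ _) ?_).symm
      intro x _ hx
      simp only [Finset.mem_insert, Finset.mem_singleton] at hx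
      push_neg at hx
      simp [hε, hx.1, hx.2]
    rw [this, Finset.prod_pair (Ne.symm hki)]
    simp [hε]
  have hent : ∀ A : Matrix (Fin n) (Fin n) ℝ, (g * A * gᵀ) i j = -(A i j) := by
    intro A
    rw [hg, Matrix.diagonal_transpose, Matrix.mul_diagonal, Matrix.diagonal_mul]
    have h1 : ε i = -1 := by simp [hε]
    have h2 : ε j = 1 := by simp [hε, hij.symm, Ne.symm hkj]
    rw [h1, h2]; ring
  have := m_conj (κ := κ) hinvL hinvR g hg1 hg2 i j
  have h2 : ∫ A, (g * A * gᵀ) i j * w κ A ∂μ = - ∫ A, A i j * w κ A ∂μ := by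
    rw [← integral_neg]
    refine integral_congr_ae (Filter.Eventually.of_forall fun A => ?_)
    dsimp only
    rw [hent A]; ring
  rw [h2] at this
  linarith

/-! ### The two-dimensional case -/

noncomputable def R2 (θ : ℝ) : Matrix (Fin 2) (Fin 2) ℝ :=
  !![Real.cos θ, -Real.sin θ; Real.sin θ, Real.cos θ]

lemma R2_mul (θ φ : ℝ) : R2 θ * R2 φ = R2 (θ + φ) := by
  unfold R2
  rw [show (!![Real.cos θ, -Real.sin θ; Real.sin θ, Real.cos θ] *
      !![Real.cos φ, -Real.sin φ; Real.sin φ, Real.cos φ]) = _ from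
      Matrix.mul_fin_two _ _ _ _ _ _ _ _]
  rw [Real.cos_add, Real.sin_add]
  congr 1 <;> ring

lemma R2_zero : R2 0 = 1 := by
  unfold R2
  simp [Matrix.one_fin_two]

lemma R2_transpose (θ : ℝ) : (R2 θ)ᵀ = R2 (-θ) := by
  unfold R2
  ext i j
  fin_cases i <;> fin_cases j <;> simp

lemma R2_orth (θ : ℝ) : (R2 θ)ᵀ * R2 θ = 1 := by
  rw [R2_transpose, R2_mul, neg_add_cancel, R2_zero]

lemma R2_det (θ : ℝ) : (R2 θ).det = 1 := by
  unfold R2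
  rw [Matrix.det_fin_two_of]
  nlinarith [Real.sin_sq_add_cos_sq θ]

lemma R2_trace (θ : ℝ) : (R2 θ).trace = 2 * Real.cos θ := by
  unfold R2
  rw [Matrix.trace_fin_two_of]; ring

lemma R2_entry10 (θ : ℝ) : R2 θ 1 0 = Real.sin θ := rfl

lemma continuous_R2 : Continuous R2 := by
  unfold R2
  refine continuous_matrix fun i j => ?_
  fin_cases i <;> fin_cases j <;> simp <;> continuity

lemma so2_param {A : Matrix (Fin 2) (Fin 2) ℝ} (h1 : Aᵀ * A = 1) (h2 : A.det = 1) :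
    ∃ φ, A = R2 φ := by
  have hsq : A 0 0 ^ 2 + A 1 0 ^ 2 = 1 := by
    have := congrFun (congrFun h1 0) 0
    simp [Matrix.mul_apply, Fin.sum_univ_two, Matrix.one_apply] at this
    nlinarith [this]
  have horth : A 0 0 * A 0 1 + A 1 0 * A 1 1 = 0 := by
    have := congrFun (congrFun h1 0) 1
    simpa [Matrix.mul_apply, Fin.sum_univ_two, Matrix.one_apply] using this
  have hdet : A 0 0 * A 1 1 - A 0 1 * A 1 0 = 1 := by
    have := h2
    rw [Matrix.det_fin_two] at this
    linarith [this]
  set a := A 0 0 with ha'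
  set b := A 1 0 with hb'
  set c := A 0 1 with hc'
  set d := A 1 1 with hd'
  have hd : d = a := by linear_combination a * hdet + b * horth - d * hsq
  have hc : c = -b := by linear_combination a * horth - c * hsq - b * hdet
  have ha1 : -1 ≤ a := by nlinarith
  have ha2 : a ≤ 1 := by nlinarith
  have habs : Real.sqrt (1 - a ^ 2) = |b| := by
    rw [show 1 - a ^ 2 = b ^ 2 by linarith, Real.sqrt_sq_eq_abs]
  set φ := if 0 ≤ b then Real.arccos a else -Real.arccos a with hφ
  have hcos : Real.cos φ = a := by
    rw [hφ]; split_ifs <;> simp [Real.cos_arccos ha1 ha2]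
  have hsin : Real.sin φ = b := by
    rw [hφ]; split_ifs with hb
    · rw [Real.sin_arccos, habs, abs_of_nonneg hb]
    · rw [Real.sin_neg, Real.sin_arccos, habs, abs_of_neg (lt_of_not_ge hb)]; ring
  refine ⟨φ, ?_⟩
  have h00 : A 0 0 = Real.cos φ := by rw [hcos, ha']
  have h10 : A 1 0 = Real.sin φ := by rw [hsin, hb']
  have h01 : A 0 1 = -Real.sin φ := by rw [hsin, ← hc', hc, hb']
  have h11 : A 1 1 = Real.cos φ := by rw [hcos, ← hd', hd, ha']
  ext i j
  fin_cases i <;> fin_cases j <;> simp [R2]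
  · exact h00
  · exact h01
  · exact h10
  · exact h11

lemma sin_exp_integral (κ : ℝ) (hκ : 0 < κ) :
    ∫ θ in (0:ℝ)..(2 * π), Real.sin θ * Real.exp (κ * Real.cos θ) = 0 := by
  have hderiv : ∀ θ ∈ Set.uIcc (0:ℝ) (2 * π),
      HasDerivAt (fun t => -(1 / κ) * Real.exp (κ * Real.cos t))
        (Real.sin θ * Real.exp (κ * Real.cos θ)) θ := by
    intro θ _
    have h1 : HasDerivAt (fun t : ℝ => κ * Real.cos t) (κ * -Real.sin θ) θ :=
      (Real.hasDerivAt_cos θ).const_mul κ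
    have h2 : HasDerivAt (fun t : ℝ => Real.exp (κ * Real.cos t))
        (Real.exp (κ * Real.cos θ) * (κ * -Real.sin θ)) θ := h1.exp
    have := h2.const_mul (-(1 / κ))
    refine this.congr_deriv ?_
    linear_combination (Real.sin θ * Real.exp (κ * Real.cos θ)) * mul_inv_cancel₀ hκ.ne'
  have hint : IntervalIntegrable (fun θ => Real.sin θ * Real.exp (κ * Real.cos θ))
      MeasureTheory.volume 0 (2 * π) :=
    (Real.continuous_sin.mul (Real.continuous_exp.comp
      (continuous_const.mul Real.continuous_cos))).intervalIntegrable _ _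
  rw [intervalIntegral.integral_eq_sub_of_hasDerivAt hderiv hint]
  simp [Real.cos_two_pi]

lemma m2_10_zero {μ : Measure (Matrix (Fin 2) (Fin 2) ℝ)} [IsProbabilityMeasure μ] {κ : ℝ}
    (hκ : 0 < κ) (hsupp : ∀ᵐ A ∂μ, Aᵀ * A = 1 ∧ A.det = 1)
    (hinvL : ∀ g : Matrix (Fin 2) (Fin 2) ℝ, gᵀ * g = 1 → g.det = 1 →
      MeasurePreserving (fun A => g * A) μ μ) :
    ∫ A, A 1 0 * w κ A ∂μ = 0 := by
  classical
  set f : Matrix (Fin 2) (Fin 2) ℝ → ℝ := fun A => A 1 0 * w κ A with hf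
  have hfc : Continuous f := (continuous_entry 1 0).mul (continuous_w κ)
  set ν : Measure ℝ := volume.restrict (Set.Ioc (0:ℝ) (2 * π)) with hν
  haveI : IsFiniteMeasure ν := by
    constructor
    rw [hν, Measure.restrict_apply_univ]
    simp [Real.volume_Ioc]
    exact ENNReal.mul_lt_top (by simp) ENNReal.ofReal_lt_top
  have hae : ∀ᵐ p : ℝ × Matrix (Fin 2) (Fin 2) ℝ ∂(ν.prod μ), p.2ᵀ * p.2 = 1 ∧ p.2.det = 1 := by
    obtain ⟨B, hBsub, hBmeas, hB0⟩ := exists_measurable_superset_of_null (ae_iff.mp hsupp)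
    rw [ae_iff]
    refine measure_mono_null (fun p hp => (Set.mem_preimage (f := Prod.snd)).2 (hBsub hp)) ?_
    rw [← Measure.map_apply measurable_snd hBmeas, Measure.map_snd_prod]
    simp [hB0]
  have hG : Integrable (Function.uncurry fun θ A => f (R2 θ * A)) (ν.prod μ) := by
    refine Integrable.mono' (integrable_const (Real.exp (κ * (2:ℕ) / 2))) ?_ ?_
    · exact (((continuous_entry 1 0).comp
        ((continuous_R2.comp continuous_fst).matrix_mul continuous_snd)).mul
        ((continuous_w κ).comp
        ((continuous_R2.comp continuous_fst).matrix_mul continuous_snd))).aestronglyMeasurable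
    · filter_upwards [hae] with p hp
      have horth : (R2 p.1 * p.2)ᵀ * (R2 p.1 * p.2) = 1 := by
        rw [Matrix.transpose_mul, Matrix.mul_assoc, ← Matrix.mul_assoc (R2 p.1)ᵀ,
          R2_orth, Matrix.one_mul, hp.1]
      have h1 := entry_abs_le horth 1 0
      have h2 := w_le hκ horth
      have h3 : (0:ℝ) < w κ (R2 p.1 * p.2) := Real.exp_pos _
      show ‖f (R2 p.1 * p.2)‖ ≤ Real.exp (κ * (2:ℕ) / 2)
      rw [hf]
      dsimp only
      rw [Real.norm_eq_abs, abs_mul, abs_of_pos h3]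
      calc |(R2 p.1 * p.2) 1 0| * w κ (R2 p.1 * p.2)
          ≤ 1 * Real.exp (κ * (2:ℕ) / 2) := mul_le_mul h1 h2 h3.le zero_le_one
        _ = _ := one_mul _
  have hswap := MeasureTheory.integral_integral_swap hG
  have hL : ∀ θ : ℝ, ∫ A, f (R2 θ * A) ∂μ = ∫ A, f A ∂μ := fun θ =>
    (integral_comp_mp (hinvL (R2 θ) (R2_orth θ) (R2_det θ)) hfc.aestronglyMeasurable).symm
  have hLHS : (∫ θ, ∫ A, f (R2 θ * A) ∂μ ∂ν) = (2 * π) * ∫ A, f A ∂μ := by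
    calc (∫ θ, ∫ A, f (R2 θ * A) ∂μ ∂ν) = ∫ _θ, (∫ A, f A ∂μ) ∂ν := by
          refine integral_congr_ae (Filter.Eventually.of_forall fun θ => hL θ)
      _ = (ν Set.univ).toReal • ∫ A, f A ∂μ := integral_const _
      _ = (2 * π) * ∫ A, f A ∂μ := by
          rw [hν, Measure.restrict_apply_univ, Real.volume_Ioc, smul_eq_mul]
          rw [ENNReal.toReal_ofReal (by nlinarith [Real.pi_pos])]
          ring_nf
  have hG2 : ∀ φ : ℝ, ∫ θ in (0:ℝ)..(2 * π), f (R2 θ * R2 φ) = 0 := by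
    intro φ
    have hfR : ∀ ψ : ℝ, f (R2 ψ) = Real.sin ψ * Real.exp (κ * Real.cos ψ) := by
      intro ψ
      rw [hf]
      dsimp only
      rw [R2_entry10, w, R2_trace, show κ * (2 * Real.cos ψ) / 2 = κ * Real.cos ψ by ring]
    have hper : Function.Periodic (fun ψ => Real.sin ψ * Real.exp (κ * Real.cos ψ)) (2 * π) := by
      intro x
      simp [Real.sin_add_two_pi, Real.cos_add_two_pi]
    calc ∫ θ in (0:ℝ)..(2 * π), f (R2 θ * R2 φ)
        = ∫ θ in (0:ℝ)..(2 * π), Real.sin (θ + φ) * Real.exp (κ * Real.cos (θ + φ)) := by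
          refine intervalIntegral.integral_congr fun θ _ => ?_
          rw [R2_mul, hfR]
      _ = ∫ ψ in (0 + φ)..(2 * π + φ), Real.sin ψ * Real.exp (κ * Real.cos ψ) :=
          intervalIntegral.integral_comp_add_right
            (fun ψ => Real.sin ψ * Real.exp (κ * Real.cos ψ)) φ
      _ = ∫ ψ in φ..(φ + 2 * π), Real.sin ψ * Real.exp (κ * Real.cos ψ) := by
          rw [zero_add, add_comm (2 * π) φ]
      _ = ∫ ψ in (0:ℝ)..(0 + 2 * π), Real.sin ψ * Real.exp (κ * Real.cos ψ) :=
          hper.intervalIntegral_add_eq φ 0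
      _ = 0 := by rw [zero_add]; exact sin_exp_integral κ hκ
  have hRHS : (∫ A, ∫ θ, f (R2 θ * A) ∂ν ∂μ) = 0 := by
    rw [← integral_zero (Matrix (Fin 2) (Fin 2) ℝ) ℝ (μ := μ)]
    refine integral_congr_ae ?_
    filter_upwards [hsupp] with A hA
    obtain ⟨φ, rfl⟩ := so2_param hA.1 hA.2
    have : (∫ θ, f (R2 θ * R2 φ) ∂ν) = ∫ θ in (0:ℝ)..(2 * π), f (R2 θ * R2 φ) := by
      rw [intervalIntegral.integral_of_le (by positivity), hν]
    rw [this, hG2 φ]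
  rw [hswap] at hLHS
  rw [hRHS] at hLHS
  have hπ : (2 * π) ≠ 0 := by positivity
  rcases mul_eq_zero.mp hLHS.symm with h | h
  · exact absurd h hπ
  · exact h

lemma J_conj (A : Matrix (Fin 2) (Fin 2) ℝ) :
    R2 (π / 2) * A * (R2 (π / 2))ᵀ = !![A 1 1, -(A 1 0); -(A 0 1), A 0 0] := by
  ext i j
  fin_cases i <;> fin_cases j <;>
    · simp [R2, Matrix.mul_apply, Matrix.transpose_apply, Fin.sum_univ_two,
        Real.cos_pi_div_two, Real.sin_pi_div_two, Matrix.vecMul, dotProduct,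
        Matrix.vecHead, Matrix.vecTail]
      try ring

lemma m2_diag_eq {μ : Measure (Matrix (Fin 2) (Fin 2) ℝ)} {κ : ℝ}
    (hinvL : ∀ g : Matrix (Fin 2) (Fin 2) ℝ, gᵀ * g = 1 → g.det = 1 →
      MeasurePreserving (fun A => g * A) μ μ)
    (hinvR : ∀ g : Matrix (Fin 2) (Fin 2) ℝ, gᵀ * g = 1 → g.det = 1 →
      MeasurePreserving (fun A => A * g) μ μ) :
    ∫ A, A 0 0 * w κ A ∂μ = ∫ A, A 1 1 * w κ A ∂μ := by
  have := m_conj (κ := κ) hinvL hinvR (R2 (π / 2)) (R2_orth _) (R2_det _) 0 0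
  rw [this]
  refine integral_congr_ae (Filter.Eventually.of_forall fun A => ?_)
  dsimp only
  rw [J_conj A]
  norm_num

lemma m2_01_eq_neg {μ : Measure (Matrix (Fin 2) (Fin 2) ℝ)} {κ : ℝ}
    (hinvL : ∀ g : Matrix (Fin 2) (Fin 2) ℝ, gᵀ * g = 1 → g.det = 1 →
      MeasurePreserving (fun A => g * A) μ μ)
    (hinvR : ∀ g : Matrix (Fin 2) (Fin 2) ℝ, gᵀ * g = 1 → g.det = 1 →
      MeasurePreserving (fun A => A * g) μ μ) :
    ∫ A, A 0 1 * w κ A ∂μ = - ∫ A, A 1 0 * w κ A ∂μ := by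
  have := m_conj (κ := κ) hinvL hinvR (R2 (π / 2)) (R2_orth _) (R2_det _) 0 1
  rw [this, ← integral_neg]
  refine integral_congr_ae (Filter.Eventually.of_forall fun A => ?_)
  dsimp only
  rw [J_conj A]
  norm_num

/-! ### The structure lemma -/

lemma m_struct {n : ℕ} (hn : 0 < n) {κ : ℝ} (hκ : 0 < κ)
    {μ : Measure (Matrix (Fin n) (Fin n) ℝ)} [IsProbabilityMeasure μ]
    (hsupp : ∀ᵐ A ∂μ, Aᵀ * A = 1 ∧ A.det = 1)
    (hinvL : ∀ g : Matrix (Fin n) (Fin n) ℝ, gᵀ * g = 1 → g.det = 1 →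
      MeasurePreserving (fun A => g * A) μ μ)
    (hinvR : ∀ g : Matrix (Fin n) (Fin n) ℝ, gᵀ * g = 1 → g.det = 1 →
      MeasurePreserving (fun A => A * g) μ μ)
    (i j : Fin n) :
    ∫ A, A i j * w κ A ∂μ =
      if i = j then (∫ A, A.trace * w κ A ∂μ) / (n : ℝ) else 0 := by
  have hdiag : ∀ a b : Fin n, ∫ A, A a a * w κ A ∂μ = ∫ A, A b b * w κ A ∂μ := by
    obtain h1 | h2 | h3 : n = 1 ∨ n = 2 ∨ 3 ≤ n := by omega
    · subst h1; intro a b; rw [Subsingleton.elim a b]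
    · subst h2
      have h01 : ∫ A, A 0 0 * w κ A ∂μ = ∫ A, A 1 1 * w κ A ∂μ := m2_diag_eq hinvL hinvR
      intro a b
      fin_cases a <;> fin_cases b
      · rfl
      · exact h01
      · exact h01.symm
      · rfl
    · intro a b; exact m_diag_eq h3 hinvL hinvR b a
  have hoff : ∀ a b : Fin n, a ≠ b → ∫ A, A a b * w κ A ∂μ = 0 := by
    obtain h1 | h2 | h3 : n = 1 ∨ n = 2 ∨ 3 ≤ n := by omega
    · subst h1; intro a b hab; exact absurd (Subsingleton.elim a b) hab
    · subst h2
      have h10 : ∫ A, A 1 0 * w κ A ∂μ = 0 := m2_10_zero hκ hsupp hinvL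
      have h01 : ∫ A, A 0 1 * w κ A ∂μ = 0 := by
        rw [m2_01_eq_neg hinvL hinvR, h10, neg_zero]
      intro a b hab
      fin_cases a <;> fin_cases b
      · exact absurd rfl hab
      · exact h01
      · exact h10
      · exact absurd rfl hab
    · intro a b hab; exact m_offdiag h3 hinvL hinvR hab
  rcases eq_or_ne i j with rfl | hij
  · rw [if_pos rfl]
    have htr : ∫ A, A.trace * w κ A ∂μ = ∑ k : Fin n, ∫ A, A k k * w κ A ∂μ := by
      rw [← integral_finset_sum _ fun k _ => integrable_entry_w hκ hsupp k k]
      refine integral_congr_ae (Filter.Eventually.of_forall fun A => ?_)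
      dsimp only
      rw [Matrix.trace, Finset.sum_mul]
      rfl
    have hsum : ∑ k : Fin n, ∫ A, A k k * w κ A ∂μ = n * ∫ A, A i i * w κ A ∂μ := by
      rw [Finset.sum_congr rfl fun k _ => hdiag k i]
      simp [Finset.sum_const, nsmul_eq_mul]
    have hn0 : (n : ℝ) ≠ 0 := Nat.cast_ne_zero.2 hn.ne'
    rw [htr, hsum, mul_comm, mul_div_assoc, div_self hn0, mul_one]
  · rw [if_neg hij]; exact hoff i j hij

end VonMisesAux

/-- There is a scalar `c₁` (depending only on `κ` and `n`), namely the average of `Tr(A)/n`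
against the weight `exp(κ Tr(A)/2)` over `SO_n`, such that
`∫_{SO_n} A M_Γ(A) dA = c₁ Γ` for every `Γ ∈ SO_n`. -/
theorem integral_A_vonMises (n : ℕ) (hn : 0 < n) (κ : ℝ) (hκ : 0 < κ)
    (μ : Measure (Matrix (Fin n) (Fin n) ℝ)) [IsProbabilityMeasure μ]
    (hsupp : ∀ᵐ A ∂μ, Aᵀ * A = 1 ∧ A.det = 1)
    (hinvL : ∀ g : Matrix (Fin n) (Fin n) ℝ, gᵀ * g = 1 → g.det = 1 →
      MeasurePreserving (fun A => g * A) μ μ)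
    (hinvR : ∀ g : Matrix (Fin n) (Fin n) ℝ, gᵀ * g = 1 → g.det = 1 →
      MeasurePreserving (fun A => A * g) μ μ)
    (hint : Integrable (fun A : Matrix (Fin n) (Fin n) ℝ => Real.exp (κ * A.trace / 2)) μ) :
    ∃ c₁ : ℝ,
      c₁ = (∫ A, (A.trace / (n : ℝ)) * Real.exp (κ * A.trace / 2) ∂μ) /
            (∫ A, Real.exp (κ * A.trace / 2) ∂μ) ∧
      ∀ Γ : Matrix (Fin n) (Fin n) ℝ, Γᵀ * Γ = 1 → Γ.det = 1 →
        (Matrix.of fun i j => ∫ A, A i j *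
            ((∫ B, Real.exp (κ * B.trace / 2) ∂μ)⁻¹ *
              Real.exp (κ * ((1 / 2) * (Γᵀ * A).trace))) ∂μ) = c₁ • Γ := by
  classical
  refine ⟨_, rfl, ?_⟩
  intro Γ hΓ1 hΓ2
  set Z : ℝ := ∫ B, Real.exp (κ * B.trace / 2) ∂μ with hZ
  set t : ℝ := ∫ A, A.trace * VonMisesAux.w κ A ∂μ with ht
  have hstruct := VonMisesAux.m_struct hn hκ hsupp hinvL hinvR
  have hc1 : (∫ A, (A.trace / (n : ℝ)) * Real.exp (κ * A.trace / 2) ∂μ) = (n : ℝ)⁻¹ * t := by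
    rw [ht, ← integral_const_mul]
    refine integral_congr_ae (Filter.Eventually.of_forall fun A => ?_)
    dsimp only
    rw [VonMisesAux.w]
    ring
  ext i j
  rw [Matrix.of_apply, Matrix.smul_apply, smul_eq_mul]
  have hΓcont : Continuous fun A : Matrix (Fin n) (Fin n) ℝ =>
      A i j * (Z⁻¹ * Real.exp (κ * (1 / 2 * (Γᵀ * A).trace))) := by
    refine (VonMisesAux.continuous_entry i j).mul (continuous_const.mul ?_)
    exact Real.continuous_exp.comp (continuous_const.mul (continuous_const.mul
      (VonMisesAux.continuous_trace.comp (continuous_const.matrix_mul continuous_id))))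
  have hcv := VonMisesAux.integral_comp_mp (hinvL Γ hΓ1 hΓ2) hΓcont.aestronglyMeasurable
  refine Eq.trans hcv ?_
  have hsimp : ∀ B : Matrix (Fin n) (Fin n) ℝ,
      (Γ * B) i j * (Z⁻¹ * Real.exp (κ * (1 / 2 * (Γᵀ * (Γ * B)).trace)))
        = ∑ k, (Γ i k * Z⁻¹) * (B k j * VonMisesAux.w κ B) := by
    intro B
    rw [← Matrix.mul_assoc, hΓ1, Matrix.one_mul, Matrix.mul_apply, Finset.sum_mul]
    refine Finset.sum_congr rfl fun k _ => ?_
    rw [VonMisesAux.w, show κ * B.trace / 2 = κ * (1 / 2 * B.trace) by ring]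
    ring
  refine Eq.trans (integral_congr_ae (Filter.Eventually.of_forall fun B => hsimp B)) ?_
  rw [integral_finset_sum _ fun k _ =>
    ((VonMisesAux.integrable_entry_w hκ hsupp k j).const_mul _)]
  have hterm : ∀ k : Fin n, ∫ B, (Γ i k * Z⁻¹) * (B k j * VonMisesAux.w κ B) ∂μ
      = if k = j then Γ i k * Z⁻¹ * (t / (n : ℝ)) else 0 := by
    intro k
    rw [integral_const_mul, hstruct k j]
    rcases eq_or_ne k j with rfl | hkj
    · rw [if_pos rfl, if_pos rfl, ← ht]
    · rw [if_neg hkj, if_neg hkj, mul_zero]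
  rw [Finset.sum_congr rfl fun k _ => hterm k]
  rw [Finset.sum_ite_eq' Finset.univ j (fun k => Γ i k * Z⁻¹ * (t / (n : ℝ)))]
  rw [if_pos (Finset.mem_univ j), hc1]
  rw [div_eq_mul_inv, div_eq_mul_inv]
  ring
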